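/- The multiple model of N systems y^{(j)} = G_u^{(j)} u + G_d^{(j)} d^{(j)} is model detectable (using only control inputs) if and only if for every i and every j ≠ i, rank [G_d^{(i)}(λ) G_u^{(i)}(λ) − G_u^{(j)}(λ)] > rank G_d^{(i)}(λ). -/

import Mathlib

/-!
Statement 14: The multiple model of N systems y^{(j)} = G_u^{(j)} u + G_d^{(j)} d^{(j)}
is model detectable (using only control inputs) if and only if for every i and
every j ≠ i, rank [G_d^{(i)}  G_u^{(i)} − G_u^{(j)}] > rank G_d^{(i)}.
-/

open Matrix Polynomial

noncomputable section

/-- A real rational function is proper. -/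
def RatFunc.IsProperR (f : RatFunc ℝ) : Prop :=
  f.num.natDegree ≤ f.denom.natDegree

/-- A real rational function is stable (continuous time). -/
def RatFunc.IsStableR (f : RatFunc ℝ) : Prop :=
  ∀ z : ℂ, (f.denom.map (algebraMap ℝ ℂ)).IsRoot z → z.re < 0

/-- A rational matrix is proper if all its entries are proper. -/
def Matrix.IsProperR {m n : Type*} (G : Matrix m n (RatFunc ℝ)) : Prop :=
  ∀ i j, (G i j).IsProperR

/-- A rational matrix is stable if all its entries are stable. -/
def Matrix.IsStableR {m n : Type*} (G : Matrix m n (RatFunc ℝ)) : Prop :=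
  ∀ i j, (G i j).IsStableR

/-! ### Auxiliary linear-algebra lemmas -/

section RankAux

variable {K : Type*} [Field K] {m a b : Type*} [Fintype m] [Fintype a] [Fintype b]

lemma MD.range_mulVecLin_fromCols (A : Matrix m a K) (B : Matrix m b K) :
    LinearMap.range (fromCols A B).mulVecLin
      = LinearMap.range A.mulVecLin ⊔ LinearMap.range B.mulVecLin := by
  apply le_antisymm
  · rintro _ ⟨x, rfl⟩
    have hx : x = Sum.elim (x ∘ Sum.inl) (x ∘ Sum.inr) := (Sum.elim_comp_inl_inr x).symm
    rw [mulVecLin_apply, hx, fromCols_mulVec_sumElim]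
    exact Submodule.add_mem _ (Submodule.mem_sup_left ⟨_, rfl⟩)
      (Submodule.mem_sup_right ⟨_, rfl⟩)
  · rw [sup_le_iff]
    constructor
    · rintro _ ⟨x, rfl⟩
      exact ⟨Sum.elim x 0, by simp [fromCols_mulVec_sumElim]⟩
    · rintro _ ⟨x, rfl⟩
      exact ⟨Sum.elim 0 x, by simp [fromCols_mulVec_sumElim]⟩

lemma MD.rank_lt_iff_exists_row (A : Matrix m a K) (B : Matrix m b K) :
    A.rank < (fromCols A B).rank ↔
      ∃ v : m → K, v ᵥ* A = 0 ∧ v ᵥ* B ≠ 0 := by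
  classical
  rw [Matrix.rank, Matrix.rank, MD.range_mulVecLin_fromCols]
  constructor
  · intro h
    have hne : ¬ LinearMap.range B.mulVecLin ≤ LinearMap.range A.mulVecLin := by
      intro hle
      rw [sup_of_le_left hle] at h
      exact lt_irrefl _ h
    obtain ⟨y, hyB, hyA⟩ := SetLike.not_le_iff_exists.mp hne
    obtain ⟨f, hf1, hf2⟩ := Submodule.exists_dual_map_eq_bot_of_notMem hyA
      inferInstance
    set v : m → K := fun i => f (Pi.single i 1) with hv
    have key : ∀ w : m → K, v ⬝ᵥ w = f w := by
      intro w
      calc v ⬝ᵥ w = ∑ i, f (Pi.single i (w i)) := by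
              refine Finset.sum_congr rfl fun i _ => ?_
              have hsingle : (Pi.single i (w i) : m → K)
                  = w i • (Pi.single i 1 : m → K) := by
                ext j
                simp [Pi.single_apply, mul_ite]
              rw [hsingle, _root_.map_smul, smul_eq_mul, hv]
              simp [dotProduct, mul_comm]
        _ = f (∑ i, Pi.single i (w i)) := (map_sum f _ _).symm
        _ = f w := by rw [Finset.univ_sum_single]
    have hker : ∀ z ∈ LinearMap.range A.mulVecLin, f z = 0 := by
      intro z hz
      have hmem : f z ∈ Submodule.map f (LinearMap.range A.mulVecLin) :=
        Submodule.mem_map_of_mem hz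
      rw [hf2] at hmem
      exact hmem
    refine ⟨v, ?_, ?_⟩
    · ext j
      have hcol : (fun i => A i j) = A *ᵥ Pi.single j 1 := by ext i; simp
      calc (v ᵥ* A) j = v ⬝ᵥ (fun i => A i j) := by
              simp [vecMul, dotProduct, mul_comm]
        _ = f (A *ᵥ Pi.single j 1) := by rw [hcol, key]
        _ = 0 := hker _ ⟨_, rfl⟩
    · intro hvB
      obtain ⟨x, rfl⟩ := hyB
      have : v ⬝ᵥ (B *ᵥ x) = 0 := by
        rw [dotProduct_mulVec, hvB, zero_dotProduct]
      rw [key] at this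
      exact hf1 this
  · rintro ⟨v, hvA, hvB⟩
    have hle : LinearMap.range A.mulVecLin ≤
        LinearMap.range A.mulVecLin ⊔ LinearMap.range B.mulVecLin := le_sup_left
    refine Submodule.finrank_lt_finrank_of_lt (lt_of_le_of_ne hle ?_)
    intro heq
    have hBle : LinearMap.range B.mulVecLin ≤ LinearMap.range A.mulVecLin := by
      rw [heq]; exact le_sup_right
    apply hvB
    ext j
    have hcol : (fun i => B i j) = B *ᵥ Pi.single j 1 := by ext i; simp
    obtain ⟨x, hx⟩ := hBle ⟨Pi.single j 1, rfl⟩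
    calc (v ᵥ* B) j = v ⬝ᵥ (fun i => B i j) := by
            simp [vecMul, dotProduct, mul_comm]
      _ = v ⬝ᵥ (A *ᵥ x) := by
            simp only [mulVecLin_apply] at hx
            rw [hcol, ← hx]
      _ = (v ᵥ* A) ⬝ᵥ x := dotProduct_mulVec v A x
      _ = 0 := by rw [hvA, zero_dotProduct]

lemma MD.fromCols_add {R : Type*} [AddCommMonoid R] {m n₁ n₂ : Type*}
    (A₁ B₁ : Matrix m n₁ R) (A₂ B₂ : Matrix m n₂ R) :
    fromCols A₁ A₂ + fromCols B₁ B₂ = fromCols (A₁ + B₁) (A₂ + B₂) := by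
  ext i (j | j) <;> simp [fromCols]

end RankAux

/-! ### Auxiliary properness/stability lemmas -/

lemma MD.zero_proper : (0 : RatFunc ℝ).IsProperR := by
  simp [RatFunc.IsProperR, RatFunc.num_zero, RatFunc.denom_zero]

lemma MD.zero_stable : (0 : RatFunc ℝ).IsStableR := by
  intro z hz
  simp [RatFunc.denom_zero, Polynomial.IsRoot] at hz

lemma MD.proper_stable_div (P : ℝ[X]) (M : ℕ) (hM : P.natDegree ≤ M) :
    (algebraMap ℝ[X] (RatFunc ℝ) P / algebraMap ℝ[X] (RatFunc ℝ) ((X + 1) ^ M)).IsProperR ∧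
    (algebraMap ℝ[X] (RatFunc ℝ) P / algebraMap ℝ[X] (RatFunc ℝ) ((X + 1) ^ M)).IsStableR := by
  set Q : ℝ[X] := (X + 1) ^ M with hQ
  have hQne : Q ≠ 0 := pow_ne_zero _ (by
    intro h
    have := Polynomial.natDegree_X_add_C (1 : ℝ)
    rw [Polynomial.C_1] at this
    simp [h] at this)
  set r : RatFunc ℝ := algebraMap ℝ[X] (RatFunc ℝ) P / algebraMap ℝ[X] (RatFunc ℝ) Q with hr
  have hdenom_dvd : r.denom ∣ Q := (RatFunc.denom_dvd hQne).mpr ⟨P, rfl⟩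
  constructor
  · by_cases hP : P = 0
    · simp only [hr, hP, map_zero, zero_div]
      exact MD.zero_proper
    · have hrne : r ≠ 0 := div_ne_zero (RatFunc.algebraMap_ne_zero hP)
        (RatFunc.algebraMap_ne_zero hQne)
      have hnum : r.num ≠ 0 := RatFunc.num_ne_zero hrne
      have hcross : r.num * Q = P * r.denom := by
        apply RatFunc.algebraMap_injective ℝ
        rw [_root_.map_mul, _root_.map_mul]
        rw [← div_eq_div_iff (RatFunc.algebraMap_ne_zero (RatFunc.denom_ne_zero r))
          (RatFunc.algebraMap_ne_zero hQne)]
        rw [RatFunc.num_div_denom]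
      have hdeg : r.num.natDegree + M = P.natDegree + r.denom.natDegree := by
        have := congrArg Polynomial.natDegree hcross
        rwa [Polynomial.natDegree_mul hnum hQne, Polynomial.natDegree_mul hP
          (RatFunc.denom_ne_zero r), hQ, Polynomial.natDegree_pow, ← Polynomial.C_1,
          Polynomial.natDegree_X_add_C, mul_one] at this
      unfold RatFunc.IsProperR
      omega
  · intro z hz
    have hdvd : (r.denom.map (algebraMap ℝ ℂ)) ∣ (Q.map (algebraMap ℝ ℂ)) :=
      Polynomial.map_dvd _ hdenom_dvd
    have hzQ : (Q.map (algebraMap ℝ ℂ)).IsRoot z := hz.dvd hdvd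
    rw [hQ, Polynomial.map_pow, Polynomial.map_add, Polynomial.map_X,
      Polynomial.map_one] at hzQ
    have hpow : (z + 1) ^ M = 0 := by
      simpa [Polynomial.IsRoot] using hzQ
    have hz1 : z + 1 = 0 := (pow_eq_zero_iff'.mp hpow).1
    have hzeq : z = -1 := by linear_combination hz1
    rw [hzeq]
    norm_num

lemma MD.exists_scale {n : Type*} [Fintype n] (f : n → RatFunc ℝ) :
    ∃ c : RatFunc ℝ, c ≠ 0 ∧ ∀ k, (c * f k).IsProperR ∧ (c * f k).IsStableR := by
  classical
  set d : ℝ[X] := ∏ k, (f k).denom with hd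
  have hdne : d ≠ 0 := Finset.prod_ne_zero_iff.mpr (fun k _ => RatFunc.denom_ne_zero _)
  have hdvd : ∀ k, (f k).denom ∣ d := fun k => Finset.dvd_prod_of_mem _ (Finset.mem_univ k)
  choose e he using hdvd
  set P : n → ℝ[X] := fun k => (f k).num * e k with hP
  set M : ℕ := Finset.univ.sup fun k => (P k).natDegree with hM
  have hXne : ((X : ℝ[X]) + 1) ^ M ≠ 0 := pow_ne_zero _ (by
    intro h
    have := Polynomial.natDegree_X_add_C (1 : ℝ)
    rw [Polynomial.C_1] at this
    simp [h] at this)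
  set c : RatFunc ℝ := algebraMap ℝ[X] (RatFunc ℝ) d
      / algebraMap ℝ[X] (RatFunc ℝ) ((X + 1) ^ M) with hc
  have hcne : c ≠ 0 := div_ne_zero (RatFunc.algebraMap_ne_zero hdne)
    (RatFunc.algebraMap_ne_zero hXne)
  refine ⟨c, hcne, fun k => ?_⟩
  have hnd : algebraMap ℝ[X] (RatFunc ℝ) (f k).denom * f k
      = algebraMap ℝ[X] (RatFunc ℝ) (f k).num := by
    have hne : algebraMap ℝ[X] (RatFunc ℝ) (f k).denom ≠ 0 :=
      RatFunc.algebraMap_ne_zero (RatFunc.denom_ne_zero (f k))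
    set aa := (f k).num
    set bb := (f k).denom
    rw [mul_comm, ← RatFunc.num_div_denom (f k)]
    exact div_mul_cancel₀ _ hne
  have hck : c * f k = algebraMap ℝ[X] (RatFunc ℝ) (P k)
      / algebraMap ℝ[X] (RatFunc ℝ) ((X + 1) ^ M) := by
    rw [hc, div_mul_eq_mul_div]
    congr 1
    calc algebraMap ℝ[X] (RatFunc ℝ) d * f k
        = (algebraMap ℝ[X] (RatFunc ℝ) (f k).denom * f k)
            * algebraMap ℝ[X] (RatFunc ℝ) (e k) := by
          rw [he k, _root_.map_mul]; ring
      _ = algebraMap ℝ[X] (RatFunc ℝ) (f k).num * algebraMap ℝ[X] (RatFunc ℝ) (e k) := by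
          rw [hnd]
      _ = algebraMap ℝ[X] (RatFunc ℝ) (P k) := by rw [hP, _root_.map_mul]
  rw [hck]
  exact MD.proper_stable_div _ _ (Finset.le_sup (f := fun k => (P k).natDegree)
    (Finset.mem_univ k))

/-- **Characterization of model detectability (using only control inputs)**. -/
theorem model_detectable_iff_rank
    (N p mu : ℕ) (md : Fin N → ℕ)
    (Gu : ∀ _ : Fin N, Matrix (Fin p) (Fin mu) (RatFunc ℝ))
    (Gd : ∀ j : Fin N, Matrix (Fin p) (Fin (md j)) (RatFunc ℝ)) :
    (∃ (q : Fin N → ℕ)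
        (Q : ∀ i : Fin N, Matrix (Fin (q i)) (Fin p ⊕ Fin mu) (RatFunc ℝ)),
        (∀ i : Fin N, (Q i).IsProperR ∧ (Q i).IsStableR) ∧
        (∀ i : Fin N,
          Q i * Matrix.fromRows (Matrix.fromCols (Gu i) (Gd i))
            (Matrix.fromCols (1 : Matrix (Fin mu) (Fin mu) (RatFunc ℝ))
              (0 : Matrix (Fin mu) (Fin (md i)) (RatFunc ℝ))) = 0) ∧
        (∀ i j : Fin N, i ≠ j →
          Q i * Matrix.fromRows (Gu j)
            (1 : Matrix (Fin mu) (Fin mu) (RatFunc ℝ)) ≠ 0)) ↔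
      ∀ i j : Fin N, j ≠ i →
        (Gd i).rank < (Matrix.fromCols (Gd i) (Gu i - Gu j)).rank := by
  classical
  constructor
  · rintro ⟨q, Q, hps, hzero, hnz⟩ i j hji
    set A := (Q i).toCols₁ with hA
    set B := (Q i).toCols₂ with hB
    have hQ : Q i = fromCols A B := (fromCols_toCols (Q i)).symm
    have hz := hzero i
    rw [hQ, fromCols_mul_fromRows, mul_fromCols, mul_fromCols, Matrix.mul_one,
      Matrix.mul_zero, MD.fromCols_add] at hz
    rw [show (0 : Matrix (Fin (q i)) (Fin mu ⊕ Fin (md i)) (RatFunc ℝ))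
        = fromCols 0 0 from fromCols_zero.symm] at hz
    obtain ⟨hz1, hz2⟩ := (fromCols_ext_iff _ _ _ _).mp hz
    have hBval : B = -(A * Gu i) := eq_neg_of_add_eq_zero_right hz1
    have hnz' := hnz i j (Ne.symm hji)
    rw [hQ, fromCols_mul_fromRows, Matrix.mul_one, hBval] at hnz'
    have hnz'' : A * (Gu j - Gu i) ≠ 0 := by
      intro h0
      apply hnz'
      rw [Matrix.mul_sub, sub_eq_add_neg] at h0
      exact h0
    obtain ⟨r, k, hrk⟩ : ∃ r k, (A * (Gu j - Gu i)) r k ≠ 0 := by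
      by_contra hcon
      push_neg at hcon
      exact hnz'' (Matrix.ext fun r k => by simpa using hcon r k)
    rw [MD.rank_lt_iff_exists_row]
    refine ⟨A r, ?_, ?_⟩
    · ext t
      have : (A r ᵥ* Gd i) t = (A * Gd i) r t := by
        simp [Matrix.mul_apply, Matrix.vecMul, dotProduct]
      rw [this]
      have := hz2
      rw [add_zero] at this
      rw [this]
      rfl
    · intro hvz
      apply hrk
      have hswap : (A r ᵥ* (Gu i - Gu j)) k = -((A * (Gu j - Gu i)) r k) := by
        simp [Matrix.mul_apply, Matrix.vecMul, dotProduct, Matrix.sub_apply,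
          mul_sub, Finset.sum_sub_distrib]
      have : (A r ᵥ* (Gu i - Gu j)) k = 0 := by rw [hvz]; rfl
      rw [hswap] at this
      exact neg_eq_zero.mp this
  · intro h
    choose v hv1 hv2 using fun i j (hji : j ≠ i) =>
      (MD.rank_lt_iff_exists_row (Gd i) (Gu i - Gu j)).mp (h i j hji)
    choose c hc0 hcps using fun i j (hji : j ≠ i) =>
      MD.exists_scale (Sum.elim (v i j hji) (-(v i j hji ᵥ* Gu i)))
    set A : ∀ i : Fin N, Matrix (Fin N) (Fin p) (RatFunc ℝ) := fun i =>
      Matrix.of fun r k => if hri : r ≠ i then c i r hri * v i r hri k else 0 with hAdef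
    refine ⟨fun _ => N, fun i => fromCols (A i) (-(A i * Gu i)), ?_, ?_, ?_⟩
    · -- properness and stability
      intro i
      have hentry : ∀ r s, (fromCols (A i) (-(A i * Gu i))) r s
          = (if hri : r ≠ i then
              c i r hri * Sum.elim (v i r hri) (-(v i r hri ᵥ* Gu i)) s else 0) := by
        intro r s
        by_cases hri : r ≠ i
        · rw [dif_pos hri]
          cases s with
          | inl k =>
            simp only [fromCols_apply_inl, Sum.elim_inl, hAdef, Matrix.of_apply,
              dif_pos hri]
          | inr k =>
            simp only [fromCols_apply_inr, Sum.elim_inr, Matrix.neg_apply,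
              Matrix.mul_apply, hAdef, Matrix.of_apply, dif_pos hri]
            simp only [Matrix.vecMul, dotProduct, Pi.neg_apply, mul_neg,
              neg_inj, Finset.mul_sum]
            exact Finset.sum_congr rfl fun x _ => (mul_assoc _ _ _)
        · rw [dif_neg hri]
          push_neg at hri
          subst hri
          cases s with
          | inl k =>
            simp only [fromCols_apply_inl, hAdef, Matrix.of_apply]
            rw [dif_neg (by simp)]
          | inr k =>
            simp only [fromCols_apply_inr, Matrix.neg_apply, Matrix.mul_apply,
              hAdef, Matrix.of_apply]
            rw [Finset.sum_eq_zero, neg_zero]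
            intro x _
            rw [dif_neg (by simp), zero_mul]
      constructor <;> intro r s <;> beta_reduce <;> rw [hentry r s]
      · by_cases hri : r ≠ i
        · rw [dif_pos hri]; exact (hcps i r hri s).1
        · rw [dif_neg hri]; exact MD.zero_proper
      · by_cases hri : r ≠ i
        · rw [dif_pos hri]; exact (hcps i r hri s).2
        · rw [dif_neg hri]; exact MD.zero_stable
    · -- exact decoupling
      intro i
      have hAGd : A i * Gd i = 0 := by
        ext r t
        rw [Matrix.mul_apply, Matrix.zero_apply]
        by_cases hri : r ≠ i
        · have : ∀ k, (A i) r k * Gd i k t = c i r hri * (v i r hri k * Gd i k t) := by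
            intro k
            simp only [hAdef, Matrix.of_apply, dif_pos hri, mul_assoc]
          rw [Finset.sum_congr rfl (fun k _ => this k), ← Finset.mul_sum]
          have hz : (v i r hri ᵥ* Gd i) t = 0 := by rw [hv1 i r hri]; rfl
          simp only [Matrix.vecMul, dotProduct] at hz
          rw [hz, mul_zero]
        · push_neg at hri
          subst hri
          rw [Finset.sum_eq_zero]
          intro k _
          simp only [hAdef, Matrix.of_apply]
          rw [dif_neg (by simp), zero_mul]
      rw [fromCols_mul_fromRows, mul_fromCols, mul_fromCols, Matrix.mul_one,
        Matrix.mul_zero, MD.fromCols_add, hAGd]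
      rw [add_neg_cancel, add_zero]
      exact fromCols_zero
    · -- nonzero residual for other models
      intro i j hij
      rw [fromCols_mul_fromRows, Matrix.mul_one]
      intro h0
      have hji : j ≠ i := Ne.symm hij
      obtain ⟨t, ht⟩ := Function.ne_iff.mp (hv2 i j hji)
      apply ht
      have hentry : (A i * Gu j + -(A i * Gu i)) j t = 0 := by rw [h0]; rfl
      rw [Matrix.add_apply, Matrix.neg_apply, Matrix.mul_apply, Matrix.mul_apply] at hentry
      have hrow : ∀ k, (A i) j k = c i j hji * v i j hji k := by
        intro k
        simp only [hAdef, Matrix.of_apply, dif_pos hji]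
      have hcv : c i j hji * (v i j hji ᵥ* (Gu i - Gu j)) t = 0 := by
        calc c i j hji * (v i j hji ᵥ* (Gu i - Gu j)) t
            = ∑ k, (A i) j k * (Gu i k t - Gu j k t) := by
              simp only [Matrix.vecMul, dotProduct, Matrix.sub_apply,
                Finset.mul_sum]
              exact Finset.sum_congr rfl fun k _ => by rw [hrow k]; ring
          _ = 0 := by
              simp only [mul_sub, Finset.sum_sub_distrib]
              linear_combination -hentry
      have hor := mul_eq_zero.mp hcv
      have := hor.resolve_left (hc0 i j hji)
      simpa using this
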